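/- For the prospect-theoretic operator $F_{i,v}(x) = k(i,v) + \alpha \sum_j p(j|i,v)\, u(\max_w x_{j,w})$ with $u$ Lipschitz with constant $L_u$, the map $F$ is Lipschitz in the sup norm with constant $\alpha L_u$; in particular, if $L_u < 1/\alpha$, $F$ is a contraction and has a unique fixed point in $\mathbb{R}^{sr}$. -/

import Mathlib

lemma isup_sub_isup_abs_le {A : Type} [Fintype A] [Nonempty A]
    (f g : A → ℝ) (C : ℝ) (h : ∀ w, |f w - g w| ≤ C) :
    |(⨆ w, f w) - ⨆ w, g w| ≤ C := by
  have key : ∀ (f g : A → ℝ), (∀ w, |f w - g w| ≤ C) →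
      (⨆ w, f w) ≤ (⨆ w, g w) + C := by
    intro f g h
    apply ciSup_le
    intro w
    have := abs_le.1 (h w)
    have hle : f w ≤ g w + C := by linarith [this.2]
    exact hle.trans (by
      gcongr
      exact le_ciSup (Set.Finite.bddAbove (Set.finite_range g)) w)
  have h1 := key f g h
  have h2 := key g f (fun w => by rw [abs_sub_comm]; exact h w)
  rw [abs_le]; constructor <;> linarith

theorem prospect_operator_lipschitz
    (S A : Type) [Fintype S] [Fintype A] [Nonempty S] [Nonempty A]
    (α Lu : ℝ) (hα0 : 0 < α) (hα1 : α < 1) (hLu : 0 ≤ Lu)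
    (k : S × A → ℝ) (hk : ∀ iv, 0 ≤ k iv)
    (p : S → A → S → ℝ)
    (hp_nonneg : ∀ i v j, 0 ≤ p i v j)
    (hp_sum : ∀ i v, ∑ j, p i v j = 1)
    (u : ℝ → ℝ) (hu : ∀ a b : ℝ, |u a - u b| ≤ Lu * |a - b|)
    (F : (S × A → ℝ) → (S × A → ℝ))
    (hF : ∀ x iv, F x iv = k iv + α * ∑ j, p iv.1 iv.2 j * u (⨆ w : A, x (j, w))) :
    (∀ x y : S × A → ℝ, ‖F x - F y‖ ≤ α * Lu * ‖x - y‖) ∧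
    (Lu < 1 / α → ∃! Qstar : S × A → ℝ, F Qstar = Qstar) := by
  have hlip : ∀ x y : S × A → ℝ, ‖F x - F y‖ ≤ α * Lu * ‖x - y‖ := by
    intro x y
    have hnn : 0 ≤ α * Lu * ‖x - y‖ := by positivity
    rw [pi_norm_le_iff_of_nonneg hnn]
    intro iv
    have hcomp : (F x - F y) iv =
        α * ∑ j, p iv.1 iv.2 j * (u (⨆ w : A, x (j, w)) - u (⨆ w : A, y (j, w))) := by
      simp [hF, Finset.mul_sum, sub_mul, mul_sub, Finset.sum_sub_distrib]
    rw [Real.norm_eq_abs, hcomp, abs_mul, abs_of_pos hα0]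
    have hterm : ∀ j, |p iv.1 iv.2 j * (u (⨆ w : A, x (j, w)) - u (⨆ w : A, y (j, w)))|
        ≤ p iv.1 iv.2 j * (Lu * ‖x - y‖) := by
      intro j
      rw [abs_mul, abs_of_nonneg (hp_nonneg _ _ _)]
      gcongr
      · exact hp_nonneg _ _ _
      calc |u (⨆ w : A, x (j, w)) - u (⨆ w : A, y (j, w))|
          ≤ Lu * |(⨆ w : A, x (j, w)) - ⨆ w : A, y (j, w)| := hu _ _
        _ ≤ Lu * ‖x - y‖ := by
            gcongr
            apply isup_sub_isup_abs_le
            intro w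
            have := norm_le_pi_norm (x - y) (j, w)
            simpa [Real.norm_eq_abs] using this
    calc α * |∑ j, p iv.1 iv.2 j * (u (⨆ w : A, x (j, w)) - u (⨆ w : A, y (j, w)))|
        ≤ α * ∑ j, |p iv.1 iv.2 j * (u (⨆ w : A, x (j, w)) - u (⨆ w : A, y (j, w)))| := by
          gcongr; exact Finset.abs_sum_le_sum_abs _ _
      _ ≤ α * ∑ j, p iv.1 iv.2 j * (Lu * ‖x - y‖) := by
          gcongr with j; exact hterm j
      _ = α * Lu * ‖x - y‖ := by
          rw [← Finset.sum_mul, hp_sum]; ring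
  refine ⟨hlip, fun hLu' => ?_⟩
  have hK1 : α * Lu < 1 := by
    have h := mul_lt_mul_of_pos_left hLu' hα0
    rwa [mul_one_div, div_self hα0.ne'] at h
  set K : NNReal := ⟨α * Lu, by positivity⟩ with hK
  have hlipw : LipschitzWith K F := by
    apply LipschitzWith.of_dist_le_mul
    intro x y
    rw [dist_eq_norm, dist_eq_norm]; exact hlip x y
  have hc : ContractingWith K F := ⟨by exact_mod_cast hK1, hlipw⟩
  exact ⟨hc.fixedPoint F, hc.fixedPoint_isFixedPt,
    fun y hy => (hc.fixedPoint_unique hy)⟩
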